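/- Stabilizability and detectability of the cascade realization (part (I) of the proof of Lemma 1): Let (A₁ ∈ ℝ^{n₁×n₁}, B₁ ∈ ℝ^{n₁×p}, C₁ ∈ ℝ^{q×n₁}, D₁ ∈ ℝ^{q×p}) and (A₂ ∈ ℝ^{n₂×n₂}, B₂ ∈ ℝ^{n₂×m}, C₂ ∈ ℝ^{p×n₂}, D₂ ∈ ℝ^{p×m}) be controllable and observable state-space realizations over ℝ. Assume every eigenvalue of A₂ has negative real part, and for every z ∈ ℂ with Re z ≥ 0 the complex matrix [[A₂ − z·I_{n₂}, B₂],[C₂, D₂]] has full row rank n₂ + p. Then the cascade realization with state matrix [[A₁, B₁·C₂],[0, A₂]], input matrix [[B₁·D₂],[B₂]], output matrix [C₁, D₁·C₂], and feedthrough D₁·D₂ is stabilizable and detectable. -/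

import Mathlib

open Matrix

noncomputable section

/-- The PBH controllability rank condition at a point `z ∈ ℂ`:
`[A − z·I, B]` has full row rank. -/
def CtrbAt {n m : Type*} [Fintype n] [Fintype m] [DecidableEq n]
    (A : Matrix n n ℝ) (B : Matrix n m ℝ) (z : ℂ) : Prop :=
  (Matrix.fromCols (A.map Complex.ofReal - z • (1 : Matrix n n ℂ))
      (B.map Complex.ofReal)).rank = Fintype.card n

/-- A pair `(A, B)` is controllable if the PBH rank condition holds at every
`z ∈ ℂ`. -/
def Controllable {n m : Type*} [Fintype n] [Fintype m] [DecidableEq n]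
    (A : Matrix n n ℝ) (B : Matrix n m ℝ) : Prop :=
  ∀ z : ℂ, CtrbAt A B z

/-- A pair `(C, A)` is observable if `(Aᵀ, Cᵀ)` is controllable. -/
def Observable {n p : Type*} [Fintype n] [Fintype p] [DecidableEq n]
    (A : Matrix n n ℝ) (C : Matrix p n ℝ) : Prop :=
  ∀ z : ℂ, CtrbAt Aᵀ Cᵀ z

/-- A pair `(A, B)` is stabilizable if the PBH rank condition holds at every
`z ∈ ℂ` with `Re z ≥ 0`. -/
def Stabilizable {n m : Type*} [Fintype n] [Fintype m] [DecidableEq n]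
    (A : Matrix n n ℝ) (B : Matrix n m ℝ) : Prop :=
  ∀ z : ℂ, 0 ≤ z.re → CtrbAt A B z

/-- A pair `(C, A)` is detectable if `(Aᵀ, Cᵀ)` is stabilizable. -/
def Detectable {n p : Type*} [Fintype n] [Fintype p] [DecidableEq n]
    (A : Matrix n n ℝ) (C : Matrix p n ℝ) : Prop :=
  ∀ z : ℂ, 0 ≤ z.re → CtrbAt Aᵀ Cᵀ z

private lemma rank_eq_card_iff' {n m : Type*} [Fintype n] [Fintype m] (M : Matrix n m ℂ) :
    M.rank = Fintype.card n ↔ ∀ v : n → ℂ, v ᵥ* M = 0 → v = 0 := by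
  rw [← Matrix.rank_transpose, Matrix.rank]
  have h := LinearMap.finrank_range_add_finrank_ker (Matrix.mulVecLin Mᵀ)
  rw [Module.finrank_fintype_fun_eq_card] at h
  have hk : (LinearMap.ker (Matrix.mulVecLin Mᵀ) = ⊥) ↔ ∀ v : n → ℂ, v ᵥ* M = 0 → v = 0 := by
    rw [LinearMap.ker_eq_bot']
    simp [Matrix.mulVecLin_apply, Matrix.mulVec_transpose]
  rw [← hk]
  constructor
  · intro hr
    have : Module.finrank ℂ (LinearMap.ker (Matrix.mulVecLin Mᵀ)) = 0 := by omega
    exact Submodule.finrank_eq_zero.mp this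
  · intro hker
    rw [hker, finrank_bot] at h
    omega

private lemma map_mul_ofReal' {a b c : Type*} [Fintype b] (M : Matrix a b ℝ) (N : Matrix b c ℝ) :
    (M * N).map Complex.ofReal = M.map Complex.ofReal * N.map Complex.ofReal :=
  Matrix.map_mul (f := Complex.ofRealHom)

/-- **Stabilizability and detectability of the cascade realization (part (I) of
the proof of Lemma 1).** -/
theorem cascade_stabilizable_detectable {n₁ n₂ p q m : ℕ}
    (A₁ : Matrix (Fin n₁) (Fin n₁) ℝ) (B₁ : Matrix (Fin n₁) (Fin p) ℝ)
    (C₁ : Matrix (Fin q) (Fin n₁) ℝ) (D₁ : Matrix (Fin q) (Fin p) ℝ)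
    (A₂ : Matrix (Fin n₂) (Fin n₂) ℝ) (B₂ : Matrix (Fin n₂) (Fin m) ℝ)
    (C₂ : Matrix (Fin p) (Fin n₂) ℝ) (D₂ : Matrix (Fin p) (Fin m) ℝ)
    (hc₁ : Controllable A₁ B₁) (ho₁ : Observable A₁ C₁)
    (hc₂ : Controllable A₂ B₂) (ho₂ : Observable A₂ C₂)
    (hA₂ : ∀ z : ℂ, (A₂.map Complex.ofReal - z • (1 : Matrix (Fin n₂) (Fin n₂) ℂ)).det = 0 →
      z.re < 0)
    (hrows : ∀ z : ℂ, 0 ≤ z.re →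
      (Matrix.fromBlocks (A₂.map Complex.ofReal - z • (1 : Matrix (Fin n₂) (Fin n₂) ℂ))
          (B₂.map Complex.ofReal) (C₂.map Complex.ofReal) (D₂.map Complex.ofReal)).rank
        = n₂ + p) :
    Stabilizable (Matrix.fromBlocks A₁ (B₁ * C₂) 0 A₂) (Matrix.fromRows (B₁ * D₂) B₂) ∧
    Detectable (Matrix.fromBlocks A₁ (B₁ * C₂) 0 A₂) (Matrix.fromCols C₁ (D₁ * C₂)) := by
  set a₁ := A₁.map Complex.ofReal
  set b₁ := B₁.map Complex.ofReal
  set c₁ := C₁.map Complex.ofReal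
  set d₁ := D₁.map Complex.ofReal
  set a₂ := A₂.map Complex.ofReal
  set b₂ := B₂.map Complex.ofReal
  set c₂ := C₂.map Complex.ofReal
  set d₂ := D₂.map Complex.ofReal
  constructor
  · -- Stabilizable
    intro z hz
    unfold CtrbAt
    have h1 : ((Matrix.fromBlocks A₁ (B₁ * C₂) 0 A₂).map Complex.ofReal
          - z • (1 : Matrix (Fin n₁ ⊕ Fin n₂) (Fin n₁ ⊕ Fin n₂) ℂ))
        = Matrix.fromBlocks (a₁ - z • 1) (b₁ * c₂) 0 (a₂ - z • 1) := by
      rw [← Matrix.fromBlocks_one, Matrix.fromBlocks_smul, Matrix.fromBlocks_map]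
      ext (i | i) (j | j) <;>
        simp [a₁, a₂, b₁, c₂, Matrix.sub_apply, ← map_mul_ofReal']
    have h2 : ((Matrix.fromRows (B₁ * D₂) B₂).map Complex.ofReal)
        = Matrix.fromRows (b₁ * d₂) b₂ := by
      ext (i | i) j <;> simp [b₁, b₂, d₂, ← map_mul_ofReal']
    rw [h1, h2, rank_eq_card_iff']
    intro v hv
    have hvv : v = Sum.elim (v ∘ Sum.inl) (v ∘ Sum.inr) := by
      funext i; cases i <;> rfl
    set x₁ := v ∘ Sum.inl with hx1def
    set x₂ := v ∘ Sum.inr with hx2def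
    rw [Matrix.vecMul_fromCols] at hv
    have hL : v ᵥ* Matrix.fromBlocks (a₁ - z • 1) (b₁ * c₂) 0 (a₂ - z • 1) = 0 :=
      funext fun j => congrFun hv (Sum.inl j)
    have hR : v ᵥ* Matrix.fromRows (b₁ * d₂) b₂ = 0 :=
      funext fun j => congrFun hv (Sum.inr j)
    rw [Matrix.vecMul_fromBlocks] at hL
    have e1 : x₁ ᵥ* (a₁ - z • 1) = 0 := by
      have := funext fun j => congrFun hL (Sum.inl j)
      simp [Matrix.vecMul_zero] at this
      exact this
    have e2 : x₁ ᵥ* (b₁ * c₂) + x₂ ᵥ* (a₂ - z • 1) = 0 :=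
      funext fun j => congrFun hL (Sum.inr j)
    rw [hvv, Matrix.sumElim_vecMul_fromRows] at hR
    -- use the full row rank of the 2×2 block
    have hr0 := hrows z hz
    rw [show n₂ + p = Fintype.card (Fin n₂ ⊕ Fin p) by simp] at hr0
    have hr := (rank_eq_card_iff' _).mp hr0
    have c1 : x₂ ᵥ* (a₂ - z • 1) + (x₁ ᵥ* b₁) ᵥ* c₂ = 0 := by
      rw [Matrix.vecMul_vecMul, add_comm]; exact e2
    have c2 : x₂ ᵥ* b₂ + (x₁ ᵥ* b₁) ᵥ* d₂ = 0 := by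
      rw [Matrix.vecMul_vecMul, add_comm]; exact hR
    have hu : Sum.elim x₂ (x₁ ᵥ* b₁) ᵥ*
        Matrix.fromBlocks (a₂ - z • 1) b₂ c₂ d₂ = 0 := by
      rw [Matrix.vecMul_fromBlocks]
      simp only [Sum.elim_comp_inl, Sum.elim_comp_inr]
      rw [c1, c2]
      funext i; cases i <;> rfl
    have hu0 := hr _ hu
    have hx₂ : x₂ = 0 := funext fun j => congrFun hu0 (Sum.inl j)
    have hw : x₁ ᵥ* b₁ = 0 := funext fun j => congrFun hu0 (Sum.inr j)
    have hx₁ : x₁ = 0 := by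
      refine (rank_eq_card_iff' _).mp (hc₁ z) x₁ ?_
      rw [Matrix.vecMul_fromCols, e1, hw]
      funext i; cases i <;> rfl
    rw [hvv, hx₁, hx₂]
    funext i; cases i <;> rfl
  · -- Detectable
    intro z hz
    unfold CtrbAt
    have h1 : (((Matrix.fromBlocks A₁ (B₁ * C₂) 0 A₂)ᵀ).map Complex.ofReal
          - z • (1 : Matrix (Fin n₁ ⊕ Fin n₂) (Fin n₁ ⊕ Fin n₂) ℂ))
        = Matrix.fromBlocks (a₁ᵀ - z • 1) 0 ((b₁ * c₂)ᵀ) (a₂ᵀ - z • 1) := by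
      rw [Matrix.fromBlocks_transpose, ← Matrix.fromBlocks_one, Matrix.fromBlocks_smul,
        Matrix.fromBlocks_map]
      ext (i | i) (j | j) <;>
        simp [a₁, a₂, b₁, c₂, Matrix.sub_apply, Matrix.transpose_apply, ← map_mul_ofReal', Matrix.mul_apply, mul_comm]
    have h2 : (((Matrix.fromCols C₁ (D₁ * C₂))ᵀ).map Complex.ofReal)
        = Matrix.fromRows c₁ᵀ ((d₁ * c₂)ᵀ) := by
      rw [Matrix.transpose_fromCols]
      ext (i | i) j <;>
        simp [c₁, d₁, c₂, Matrix.transpose_apply, ← map_mul_ofReal', Matrix.mul_apply, mul_comm]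
    rw [h1, h2, rank_eq_card_iff']
    intro v hv
    have hvv : v = Sum.elim (v ∘ Sum.inl) (v ∘ Sum.inr) := by
      funext i; cases i <;> rfl
    set x₁ := v ∘ Sum.inl with hx1def
    set x₂ := v ∘ Sum.inr with hx2def
    rw [Matrix.vecMul_fromCols] at hv
    have hL : v ᵥ* Matrix.fromBlocks (a₁ᵀ - z • 1) 0 ((b₁ * c₂)ᵀ) (a₂ᵀ - z • 1) = 0 :=
      funext fun j => congrFun hv (Sum.inl j)
    have hR : v ᵥ* Matrix.fromRows c₁ᵀ ((d₁ * c₂)ᵀ) = 0 :=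
      funext fun j => congrFun hv (Sum.inr j)
    rw [Matrix.vecMul_fromBlocks] at hL
    have e1 : x₁ ᵥ* (a₁ᵀ - z • 1) + x₂ ᵥ* (b₁ * c₂)ᵀ = 0 :=
      funext fun j => congrFun hL (Sum.inl j)
    have e2 : x₂ ᵥ* (a₂ᵀ - z • 1) = 0 := by
      have := funext fun j => congrFun hL (Sum.inr j)
      simp [Matrix.vecMul_zero] at this
      exact this
    rw [hvv, Matrix.sumElim_vecMul_fromRows] at hR
    -- x₂ = 0 since a₂ − z has nonzero determinant
    have hdet : (a₂ - z • 1).det ≠ 0 := fun h => absurd (hA₂ z h) (not_lt.mpr hz)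
    have hunit : IsUnit (a₂ - z • (1 : Matrix (Fin n₂) (Fin n₂) ℂ)) :=
      (Matrix.isUnit_iff_isUnit_det _).mpr (isUnit_iff_ne_zero.mpr hdet)
    have hinj := Matrix.mulVec_injective_iff_isUnit.mpr hunit
    have hx₂ : x₂ = 0 := by
      apply hinj
      have : (a₂ᵀ - z • 1)ᵀ *ᵥ x₂ = 0 := by
        rw [Matrix.mulVec_transpose]; exact e2
      rw [Matrix.transpose_sub, Matrix.transpose_transpose, Matrix.transpose_smul,
        Matrix.transpose_one] at this
      rw [this, Matrix.mulVec_zero]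
    -- x₁ = 0 by observability of (A₁, C₁)
    have hx₁ : x₁ = 0 := by
      refine (rank_eq_card_iff' _).mp (ho₁ z) x₁ ?_
      rw [Matrix.vecMul_fromCols]
      have g1 : x₁ ᵥ* (A₁ᵀ.map Complex.ofReal - z • 1) = 0 := by
        rw [Matrix.transpose_map]
        have := e1
        rw [hx₂, Matrix.zero_vecMul, add_zero] at this
        exact this
      have g2 : x₁ ᵥ* (C₁ᵀ.map Complex.ofReal) = 0 := by
        rw [Matrix.transpose_map]
        have := hR
        rw [hx₂, Matrix.zero_vecMul, add_zero] at this
        exact this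
      rw [g1, g2]
      funext i; cases i <;> rfl
    rw [hvv, hx₁, hx₂]
    funext i; cases i <;> rfl
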